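/- For every real number k₀, if a polynomial a(t,s) ∈ ℝ[t,s] divides α(t,s), divides β_{k₀}(t,s), and divides the product B(t)·B(s)·D(t)·D(s), then a is a unit (a nonzero constant). In other words, no nonconstant polynomial simultaneously divides gcd(α, β_{k₀}) and B(t)·B(s)·D(t)·D(s). -/

import Mathlib

/- In ℝ[t,s] (modelled as MvPolynomial (Fin 2) ℝ, with t = X 0 and s = X 1):
`inT p` is p(t), `inS p` is p(s). -/
noncomputable def inT (p : Polynomial ℝ) : MvPolynomial (Fin 2) ℝ :=
  Polynomial.aeval (MvPolynomial.X 0) p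

noncomputable def inS (p : Polynomial ℝ) : MvPolynomial (Fin 2) ℝ :=
  Polynomial.aeval (MvPolynomial.X 1) p

/-- α(t,s) = A(t)B(s) − A(s)B(t). -/
noncomputable def alphaPoly (A B : Polynomial ℝ) : MvPolynomial (Fin 2) ℝ :=
  inT A * inS B - inS A * inT B

/-- β_k(t,s) = C(t)D(s) − C(s)D(t) − 2kπ·D(t)D(s). -/
noncomputable def betaPoly (C D : Polynomial ℝ) (k : ℝ) : MvPolynomial (Fin 2) ℝ :=
  inT C * inS D - inS C * inT D -
    MvPolynomial.C (2 * k * Real.pi) * (inT D * inS D)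

noncomputable def toPoly : MvPolynomial (Fin 2) ℝ →ₐ[ℝ] Polynomial ℝ :=
  MvPolynomial.aeval (fun _ => Polynomial.X)

lemma toPoly_inT (p : Polynomial ℝ) : toPoly (inT p) = p := by
  rw [inT, ← Polynomial.aeval_algHom_apply]
  simp [toPoly]

lemma toPoly_inS (p : Polynomial ℝ) : toPoly (inS p) = p := by
  rw [inS, ← Polynomial.aeval_algHom_apply]
  simp [toPoly]

lemma inT_ne_zero {p : Polynomial ℝ} (hp : p ≠ 0) : inT p ≠ 0 := fun h => hp (by
  have := congrArg toPoly h; rwa [toPoly_inT, map_zero] at this)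

lemma inS_ne_zero {p : Polynomial ℝ} (hp : p ≠ 0) : inS p ≠ 0 := fun h => hp (by
  have := congrArg toPoly h; rwa [toPoly_inS, map_zero] at this)

lemma degreeOf_aeval_X {i j : Fin 2} (h : j ≠ i) (p : Polynomial ℝ) :
    MvPolynomial.degreeOf j (Polynomial.aeval (MvPolynomial.X i : MvPolynomial (Fin 2) ℝ) p) = 0 := by
  induction p using Polynomial.induction_on with
  | C a => simp [MvPolynomial.degreeOf_C]
  | add p q hp hq =>
      rw [map_add]
      have := MvPolynomial.degreeOf_add_le j (Polynomial.aeval (MvPolynomial.X i : MvPolynomial (Fin 2) ℝ) p) (Polynomial.aeval (MvPolynomial.X i : MvPolynomial (Fin 2) ℝ) q)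
      omega
  | monomial n a ih =>
      rw [map_mul, map_pow, Polynomial.aeval_X] at ih ⊢
      rw [pow_succ, ← mul_assoc, MvPolynomial.degreeOf_mul_X_of_ne _ h]
      exact ih

lemma degreeOf_zero_of_dvd {p q : MvPolynomial (Fin 2) ℝ} (h : p ∣ q) (hq : q ≠ 0)
    (hdeg : MvPolynomial.degreeOf 0 q = 0) : MvPolynomial.degreeOf 0 p = 0 := by
  have h' : MvPolynomial.finSuccEquiv ℝ 1 p ∣ MvPolynomial.finSuccEquiv ℝ 1 q :=
    map_dvd (MvPolynomial.finSuccEquiv ℝ 1).toAlgHom h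
  have hq' : MvPolynomial.finSuccEquiv ℝ 1 q ≠ 0 := by
    simpa using (map_ne_zero_iff _ (MvPolynomial.finSuccEquiv ℝ 1).injective).mpr hq
  have := Polynomial.natDegree_le_of_dvd h' hq'
  rw [MvPolynomial.natDegree_finSuccEquiv, MvPolynomial.natDegree_finSuccEquiv, hdeg] at this
  omega

lemma degreeOf_swap (p : MvPolynomial (Fin 2) ℝ) :
    MvPolynomial.degreeOf 0 (MvPolynomial.rename (Equiv.swap (0 : Fin 2) 1) p)
      = MvPolynomial.degreeOf 1 p := by
  have := MvPolynomial.degreeOf_rename_of_injective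
    (p := p) (f := (Equiv.swap (0 : Fin 2) 1)) (Equiv.swap (0 : Fin 2) 1).injective (1 : Fin 2)
  simpa using this

lemma degreeOf_one_of_dvd {p q : MvPolynomial (Fin 2) ℝ} (h : p ∣ q) (hq : q ≠ 0)
    (hdeg : MvPolynomial.degreeOf 1 q = 0) : MvPolynomial.degreeOf 1 p = 0 := by
  rw [← degreeOf_swap] at hdeg ⊢
  refine degreeOf_zero_of_dvd (map_dvd (MvPolynomial.renameEquiv ℝ (Equiv.swap (0 : Fin 2) 1)).toAlgHom h) ?_ hdeg
  simpa using (map_ne_zero_iff _ (MvPolynomial.renameEquiv ℝ (Equiv.swap (0 : Fin 2) 1)).injective).mpr hq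

lemma isUnit_of_degreeOf_eq_zero {p : MvPolynomial (Fin 2) ℝ} (hp : p ≠ 0)
    (h0 : MvPolynomial.degreeOf 0 p = 0) (h1 : MvPolynomial.degreeOf 1 p = 0) : IsUnit p := by
  have hsum : ∀ m ∈ p.support, m = 0 := by
    intro m hm
    ext i
    fin_cases i
    · exact Nat.le_zero.mp (h0 ▸ MvPolynomial.monomial_le_degreeOf 0 hm)
    · exact Nat.le_zero.mp (h1 ▸ MvPolynomial.monomial_le_degreeOf 1 hm)
  have hpc : p = MvPolynomial.C (MvPolynomial.coeff 0 p) := by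
    ext m
    rcases eq_or_ne m 0 with rfl | hm
    · simp
    · rw [MvPolynomial.coeff_C, if_neg (Ne.symm hm)]
      by_contra hc
      exact hm (hsum m (MvPolynomial.mem_support_iff.mpr hc))
  have hc : MvPolynomial.coeff 0 p ≠ 0 := fun h => hp (by rw [hpc, h, map_zero])
  rw [hpc]
  exact (isUnit_iff_ne_zero.mpr hc).map MvPolynomial.C

lemma no_cross_prime {p : MvPolynomial (Fin 2) ℝ} {f g : Polynomial ℝ} (hp : Prime p)
    (hf : f ≠ 0) (hg : g ≠ 0) (h1 : p ∣ inT f) (h2 : p ∣ inS g) : False := by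
  have hd1 : MvPolynomial.degreeOf 1 p = 0 :=
    degreeOf_one_of_dvd h1 (inT_ne_zero hf) (degreeOf_aeval_X (by decide) f)
  have hd0 : MvPolynomial.degreeOf 0 p = 0 :=
    degreeOf_zero_of_dvd h2 (inS_ne_zero hg) (degreeOf_aeval_X (by decide) g)
  exact hp.not_unit (isUnit_of_degreeOf_eq_zero hp.ne_zero hd0 hd1)

/- STATEMENT 2: For every real k₀, a common divisor of α, β_{k₀} and
B(t)·B(s)·D(t)·D(s) must be a unit. -/
theorem no_common_divisor_alpha_beta_denominators
    (A B C D : Polynomial ℝ) (hB : B ≠ 0) (hD : D ≠ 0)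
    (hAB : IsCoprime A B) (hCD : IsCoprime C D) (k₀ : ℝ)
    (a : MvPolynomial (Fin 2) ℝ)
    (ha1 : a ∣ alphaPoly A B) (ha2 : a ∣ betaPoly C D k₀)
    (ha3 : a ∣ inT B * inS B * inT D * inS D) :
    IsUnit a := by
  by_contra hu
  have ha0 : a ≠ 0 := by
    rintro rfl
    exact (mul_ne_zero (mul_ne_zero (mul_ne_zero (inT_ne_zero hB) (inS_ne_zero hB))
      (inT_ne_zero hD)) (inS_ne_zero hD)) (zero_dvd_iff.mp ha3)
  obtain ⟨p, hirr, hpa⟩ := WfDvdMonoid.exists_irreducible_factor hu ha0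
  have hprime : Prime p := hirr.prime
  have hpα : p ∣ alphaPoly A B := hpa.trans ha1
  have hpβ : p ∣ betaPoly C D k₀ := hpa.trans ha2
  have hpP : p ∣ inT B * inS B * inT D * inS D := hpa.trans ha3
  have hcopTAB : IsCoprime (inT A) (inT B) :=
    hAB.map (Polynomial.aeval (MvPolynomial.X 0 : MvPolynomial (Fin 2) ℝ)).toRingHom
  have hcopSAB : IsCoprime (inS A) (inS B) :=
    hAB.map (Polynomial.aeval (MvPolynomial.X 1 : MvPolynomial (Fin 2) ℝ)).toRingHom
  have hcopTCD : IsCoprime (inT C) (inT D) :=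
    hCD.map (Polynomial.aeval (MvPolynomial.X 0 : MvPolynomial (Fin 2) ℝ)).toRingHom
  have hcopSCD : IsCoprime (inS C) (inS D) :=
    hCD.map (Polynomial.aeval (MvPolynomial.X 1 : MvPolynomial (Fin 2) ℝ)).toRingHom
  rcases hprime.dvd_mul.mp hpP with h3 | hSD
  · rcases hprime.dvd_mul.mp h3 with h2 | hTD
    · rcases hprime.dvd_mul.mp h2 with hTB | hSB
      · -- p ∣ inT B
        have key : p ∣ inT A * inS B := by
          have : inT A * inS B = alphaPoly A B + inS A * inT B := by unfold alphaPoly; ring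
          rw [this]
          exact dvd_add hpα (Dvd.dvd.mul_left hTB _)
        rcases hprime.dvd_mul.mp key with hTA | hSB
        · exact absurd (hcopTAB.isUnit_of_dvd' hTA hTB) hprime.not_unit
        · exact absurd (no_cross_prime hprime hB hB hTB hSB) not_false
      · -- p ∣ inS B
        have key : p ∣ inS A * inT B := by
          have : inS A * inT B = inT A * inS B - alphaPoly A B := by unfold alphaPoly; ring
          rw [this]
          exact dvd_sub (Dvd.dvd.mul_left hSB _) hpα
        rcases hprime.dvd_mul.mp key with hSA | hTB
        · exact absurd (hcopSAB.isUnit_of_dvd' hSA hSB) hprime.not_unit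
        · exact absurd (no_cross_prime hprime hB hB hTB hSB) not_false
    · -- p ∣ inT D
      have key : p ∣ inT C * inS D := by
        have : inT C * inS D = betaPoly C D k₀ + inS C * inT D +
            MvPolynomial.C (2 * k₀ * Real.pi) * (inT D * inS D) := by unfold betaPoly; ring
        rw [this]
        exact dvd_add (dvd_add hpβ (Dvd.dvd.mul_left hTD _))
          ((hTD.mul_right _).mul_left _)
      rcases hprime.dvd_mul.mp key with hTC | hSD
      · exact absurd (hcopTCD.isUnit_of_dvd' hTC hTD) hprime.not_unit
      · exact absurd (no_cross_prime hprime hD hD hTD hSD) not_false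
  · -- p ∣ inS D
    have key : p ∣ inS C * inT D := by
      have : inS C * inT D = inT C * inS D - betaPoly C D k₀ -
          MvPolynomial.C (2 * k₀ * Real.pi) * (inT D * inS D) := by unfold betaPoly; ring
      rw [this]
      exact dvd_sub (dvd_sub (Dvd.dvd.mul_left hSD _) hpβ)
        ((hSD.mul_left _).mul_left _)
    rcases hprime.dvd_mul.mp key with hSC | hTD
    · exact absurd (hcopSCD.isUnit_of_dvd' hSC hSD) hprime.not_unit
    · exact absurd (no_cross_prime hprime hD hD hTD hSD) not_false
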